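/- Let X be an infinite T1 topological space. Then the spread, the network weight and the weight of the function space SC_p(X) all equal the cardinality of X: s(SC_p(X)) = nw(SC_p(X)) = w(SC_p(X)) = |X|. -/

import Mathlib

open Set Filter Topology Cardinal

/-- A function is scatteredly continuous if every nonempty subset `A` of the domain
contains a point at which the restriction `f|A` is continuous. -/
def ScatCont {X Y : Type*} [TopologicalSpace X] [TopologicalSpace Y] (f : X → Y) : Prop :=
  ∀ A : Set X, A.Nonempty → ∃ a ∈ A, ContinuousWithinAt f A a

/-- A family of functions is scatteredly continuous if every nonempty subset `A` of the domain
contains a point at which all restrictions `f|A`, `f ∈ F`, are continuous. -/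
def ScatContFam {X Y : Type*} [TopologicalSpace X] [TopologicalSpace Y]
    (F : Set (X → Y)) : Prop :=
  ∀ A : Set X, A.Nonempty → ∃ a ∈ A, ∀ f ∈ F, ContinuousWithinAt f A a

/-- A function is weakly discontinuous if every subset `A` of the domain contains an
open (in `A`) dense (in `A`) subset `U` such that `f|U` is continuous. -/
def WeaklyDisc {X Y : Type*} [TopologicalSpace X] [TopologicalSpace Y] (f : X → Y) : Prop :=
  ∀ A : Set X, ∃ U : Set X, U ⊆ A ∧ (∃ V : Set X, IsOpen V ∧ U = V ∩ A) ∧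
    A ⊆ closure U ∧ ContinuousOn f U

/-- A family of functions is weakly discontinuous if every subset `A` of the domain contains an
open (in `A`) dense (in `A`) subset `U` such that every `f|U`, `f ∈ F`, is continuous. -/
def WeaklyDiscFam {X Y : Type*} [TopologicalSpace X] [TopologicalSpace Y]
    (F : Set (X → Y)) : Prop :=
  ∀ A : Set X, ∃ U : Set X, U ⊆ A ∧ (∃ V : Set X, IsOpen V ∧ U = V ∩ A) ∧
    A ⊆ closure U ∧ ∀ f ∈ F, ContinuousOn f U

/-- The decomposition number of a family `F` of functions: the smallest cardinality of a
cover `𝒞` of `X` such that every `f ∈ F` restricted to every `C ∈ 𝒞` is continuous. -/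
noncomputable def Dec {X Y : Type*} [TopologicalSpace X] [TopologicalSpace Y]
    (F : Set (X → Y)) : Cardinal :=
  sInf { c : Cardinal | ∃ 𝒞 : Set (Set X), c = #𝒞 ∧ ⋃₀ 𝒞 = Set.univ ∧
    ∀ C ∈ 𝒞, ∀ f ∈ F, ContinuousOn f C }

/-- The Lindelöf number: the smallest infinite cardinal `κ` such that every open cover
has a subcover of cardinality `≤ κ`. -/
noncomputable def lindelofNum (X : Type*) [TopologicalSpace X] : Cardinal :=
  sInf { κ : Cardinal | Cardinal.aleph0 ≤ κ ∧ ∀ 𝒰 : Set (Set X), (∀ U ∈ 𝒰, IsOpen U) →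
    ⋃₀ 𝒰 = Set.univ → ∃ 𝒱 ⊆ 𝒰, #𝒱 ≤ κ ∧ ⋃₀ 𝒱 = Set.univ }

/-- The hereditary Lindelöf number: the supremum of the Lindelöf numbers of all subspaces. -/
noncomputable def heredLindelofNum (X : Type*) [TopologicalSpace X] : Cardinal :=
  ⨆ Z : Set X, lindelofNum Z

/-- A network for a topological space: a family of (arbitrary) sets such that every open
neighbourhood of every point contains a member of the family containing that point. -/
def IsNetwork {X : Type*} [TopologicalSpace X] (N : Set (Set X)) : Prop :=
  ∀ (x : X) (U : Set X), IsOpen U → x ∈ U → ∃ n ∈ N, x ∈ n ∧ n ⊆ U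

/-- The network weight: the smallest infinite cardinality of a network. -/
noncomputable def netWt (X : Type*) [TopologicalSpace X] : Cardinal :=
  sInf { c : Cardinal | ∃ N : Set (Set X), IsNetwork N ∧ c = max #N Cardinal.aleph0 }

/-- The weight: the smallest infinite cardinality of a base of the topology. -/
noncomputable def wt (X : Type*) [TopologicalSpace X] : Cardinal :=
  sInf { c : Cardinal | ∃ B : Set (Set X), TopologicalSpace.IsTopologicalBasis B ∧
    c = max #B Cardinal.aleph0 }

/-- The density: the smallest cardinality of a dense subset. -/
noncomputable def dens (X : Type*) [TopologicalSpace X] : Cardinal :=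
  sInf { c : Cardinal | ∃ D : Set X, Dense D ∧ c = #D }

/-- The hereditary density: the supremum of densities of all subspaces. -/
noncomputable def heredDens (X : Type*) [TopologicalSpace X] : Cardinal :=
  ⨆ Z : Set X, dens Z

/-- The spread: the supremum of cardinalities of discrete subspaces. -/
noncomputable def spread (X : Type*) [TopologicalSpace X] : Cardinal :=
  sSup { c : Cardinal | ∃ D : Set X, DiscreteTopology D ∧ c = #D }

/-- A subset `C` of a topological vector space over `ℝ` is σ-convex if for every sequence
`(x n)` in `C` and every sequence `(t n)` of positive reals with `∑ n, t n = 1`, the series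
`∑ n, t n • x n` converges to a point of `C`. -/
def SigmaConvex {L : Type*} [AddCommGroup L] [Module ℝ L] [TopologicalSpace L]
    (C : Set L) : Prop :=
  ∀ (x : ℕ → L) (t : ℕ → ℝ), (∀ n, x n ∈ C) → (∀ n, 0 < t n) →
    Tendsto (fun N => ∑ n ∈ Finset.range N, t n) atTop (𝓝 1) →
    ∃ c ∈ C, Tendsto (fun N => ∑ n ∈ Finset.range N, t n • x n) atTop (𝓝 c)

/-- A topological space has countable tightness if every point in the closure of a set `A`
lies in the closure of a countable subset of `A`. -/
def CountablyTight (X : Type*) [TopologicalSpace X] : Prop :=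
  ∀ (A : Set X) (a : X), a ∈ closure A → ∃ B ⊆ A, B.Countable ∧ a ∈ closure B


section Aux

open TopologicalSpace

lemma IsNetwork.of_basis {Z : Type*} [TopologicalSpace Z] {B : Set (Set Z)}
    (hB : IsTopologicalBasis B) : IsNetwork B :=
  fun x U hU hx => hB.exists_subset_of_mem_open hx hU

lemma netWt_nonempty (Z : Type*) [TopologicalSpace Z] :
    { c : Cardinal | ∃ N : Set (Set Z), IsNetwork N ∧ c = max #N Cardinal.aleph0 }.Nonempty :=
  ⟨_, Set.univ, fun x U hU hx => ⟨U, trivial, hx, subset_rfl⟩, rfl⟩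

lemma netWt_le_wt (Z : Type*) [TopologicalSpace Z] : netWt Z ≤ wt Z := by
  apply le_csInf
  · exact ⟨_, _, isTopologicalBasis_opens, rfl⟩
  · rintro c ⟨B, hB, rfl⟩
    exact csInf_le' ⟨B, IsNetwork.of_basis hB, rfl⟩

lemma card_discrete_le_network {Z : Type*} [TopologicalSpace Z] {D : Set Z}
    (hD : DiscreteTopology D) {N : Set (Set Z)} (hN : IsNetwork N) : #D ≤ #N := by
  have key : ∀ d : D, ∃ n, n ∈ N ∧ (d : Z) ∈ n ∧ n ∩ D ⊆ {(d : Z)} := by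
    intro d
    have hop : IsOpen ({d} : Set D) := isOpen_discrete _
    obtain ⟨U, hU, hUd⟩ := isOpen_induced_iff.mp hop
    have hdU : (d : Z) ∈ U := by
      have : d ∈ (Subtype.val ⁻¹' U : Set D) := by rw [hUd]; rfl
      exact this
    obtain ⟨n, hnN, hdn, hnU⟩ := hN (d : Z) U hU hdU
    refine ⟨n, hnN, hdn, ?_⟩
    rintro z ⟨hzn, hzD⟩
    have : (⟨z, hzD⟩ : D) ∈ (Subtype.val ⁻¹' U : Set D) := hnU hzn
    rw [hUd] at this
    simpa using congrArg Subtype.val this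
  choose n hnN hdn hsub using key
  have hinj : Function.Injective fun d : D => (⟨n d, hnN d⟩ : N) := by
    intro d e h
    have hne : n d = n e := congrArg Subtype.val h
    have : (e : Z) ∈ n d ∩ D := ⟨hne ▸ hdn e, e.2⟩
    exact Subtype.ext (hsub d this).symm
  exact Cardinal.mk_le_of_injective hinj

lemma spread_le_netWt (Z : Type*) [TopologicalSpace Z] : spread Z ≤ netWt Z := by
  apply csSup_le
  · exact ⟨#(∅ : Set Z), ∅, inferInstance, rfl⟩
  · rintro c ⟨D, hD, rfl⟩
    apply le_csInf (netWt_nonempty Z)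
    rintro c ⟨N, hN, rfl⟩
    exact (card_discrete_le_network hD hN).trans (le_max_left _ _)

/-- Rational cylinder sets in `X → ℝ`. -/
def cyl {X : Type*} (s : Finset (X × ℚ × ℚ)) : Set (X → ℝ) :=
  {f | ∀ t ∈ s, (t.2.1 : ℝ) < f t.1 ∧ f t.1 < (t.2.2 : ℝ)}

lemma isBasis_cyl (X : Type*) :
    IsTopologicalBasis (Set.range (cyl (X := X))) := by
  apply isTopologicalBasis_of_isOpen_of_nhds
  · rintro u ⟨s, rfl⟩
    have hcyl : cyl s = ⋂ t ∈ s, (fun f : X → ℝ => f t.1) ⁻¹' Set.Ioo (t.2.1 : ℝ) (t.2.2 : ℝ) := by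
      ext f
      simp [cyl, Set.mem_Ioo]
    rw [hcyl]
    exact isOpen_biInter_finset fun t _ => isOpen_Ioo.preimage (continuous_apply t.1)
  · intro f U hf hU
    obtain ⟨I, u, h1, h2⟩ := isOpen_pi_iff.mp hU f hf
    have key : ∀ i : I, ∃ p q : ℚ, (p : ℝ) < f i ∧ (f i : ℝ) < q ∧
        Set.Ioo (p : ℝ) (q : ℝ) ⊆ u i := by
      intro i
      obtain ⟨hop, hmem⟩ := h1 i i.2
      obtain ⟨ε, hε, hball⟩ := Metric.isOpen_iff.mp hop _ hmem
      obtain ⟨p, hp1, hp2⟩ := exists_rat_btwn (show f i - ε < f i by linarith)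
      obtain ⟨q, hq1, hq2⟩ := exists_rat_btwn (show f i < f i + ε by linarith)
      refine ⟨p, q, hp2, hq1, fun y hy => hball ?_⟩
      rw [Metric.mem_ball, Real.dist_eq, abs_lt]
      constructor
      · have := hy.1; linarith
      · have := hy.2; linarith
    classical
    choose p q hp hq hsub using key
    refine ⟨cyl (I.attach.image fun i : {x // x ∈ I} => ((i : X), p i, q i)), ⟨_, rfl⟩, ?_, ?_⟩
    · intro t ht
      simp only [Finset.mem_image, Finset.mem_attach, true_and] at ht
      obtain ⟨i, rfl⟩ := ht
      exact ⟨hp i, hq i⟩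
    · intro g hg
      apply h2
      intro i hi
      have hmem : ((i : X), p ⟨i, hi⟩, q ⟨i, hi⟩) ∈ I.attach.image fun j : {x // x ∈ I} => ((j : X), p j, q j) :=
        Finset.mem_image.mpr ⟨⟨i, hi⟩, Finset.mem_attach _ _, rfl⟩
      have := hg _ hmem
      exact hsub ⟨i, hi⟩ ⟨this.1, this.2⟩

lemma card_range_cyl (X : Type*) [Infinite X] : #(Set.range (cyl (X := X))) ≤ #X := by
  have h1 : #(Set.range (cyl (X := X))) ≤ #(Finset (X × ℚ × ℚ)) := Cardinal.mk_range_le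
  rw [Cardinal.mk_finset_of_infinite] at h1
  refine h1.trans ?_
  have : #(X × ℚ × ℚ) = #X * Cardinal.lift.{_, 0} #(ℚ × ℚ) := by
    rw [← Cardinal.lift_id #(X × ℚ × ℚ), Cardinal.mk_prod, Cardinal.lift_id'] 
    simp
  rw [this]
  have hq : #(ℚ × ℚ) = Cardinal.aleph0 := Cardinal.mk_eq_aleph0 _
  rw [hq, Cardinal.lift_aleph0, Cardinal.mul_aleph0_eq (Cardinal.aleph0_le_mk X)]

lemma wt_subset_le {X : Type*} [Infinite X] (S : Set (X → ℝ)) : wt S ≤ #X := by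
  have hb := (isBasis_cyl X).isInducing (IsInducing.subtypeVal (t := S))
  have hmem : max #(Set.preimage (Subtype.val : S → X → ℝ) '' Set.range cyl) Cardinal.aleph0 ∈
      { c : Cardinal | ∃ B : Set (Set S), IsTopologicalBasis B ∧ c = max #B Cardinal.aleph0 } :=
    ⟨_, hb, rfl⟩
  refine (csInf_le' hmem).trans ?_
  apply max_le
  · exact Cardinal.mk_image_le.trans (card_range_cyl X)
  · exact (Cardinal.aleph0_le_mk X)

variable {X : Type*} [TopologicalSpace X] [T1Space X]

open scoped Classical in
/-- Indicator of a singleton. -/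
noncomputable def ind (x : X) : X → ℝ := fun y => if y = x then 1 else 0

lemma scatCont_ind (x : X) : ScatCont (ind x) := by
  intro A hA
  by_cases h : ∃ a ∈ A, a ≠ x
  · obtain ⟨a, ha, hax⟩ := h
    refine ⟨a, ha, ContinuousAt.continuousWithinAt ?_⟩
    have heq : ind x =ᶠ[𝓝 a] fun _ => (0 : ℝ) := by
      filter_upwards [isOpen_compl_singleton.mem_nhds hax] with y hy
      simp only [Set.mem_compl_iff, Set.mem_singleton_iff] at hy
      simp [ind, hy]
    exact (continuousAt_congr heq).mpr continuousAt_const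
  · push_neg at h
    obtain ⟨a, ha⟩ := hA
    refine ⟨a, ha, ContinuousWithinAt.mono continuousWithinAt_singleton ?_⟩
    intro b hb
    rw [Set.mem_singleton_iff, h b hb, h a ha]

lemma ind_inj : Function.Injective (ind (X := X)) := by
  intro x y h
  by_contra hxy
  have := congrFun h x
  simp [ind, hxy] at this

lemma card_le_spread [Infinite X] : #X ≤ spread {f : X → ℝ | ScatCont f} := by
  set S := {f : X → ℝ | ScatCont f} with hS
  set e : X → S := fun x => ⟨ind x, scatCont_ind x⟩ with he
  have heinj : Function.Injective e := by
    intro x y h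
    exact ind_inj (congrArg Subtype.val h)
  set D : Set S := Set.range e with hD
  have hcard : #D = #X := Cardinal.mk_range_eq e heinj
  have hdisc : DiscreteTopology D := by
    rw [discreteTopology_iff_isOpen_singleton]
    rintro ⟨a, x, rfl⟩
    set V : Set S := {g | (1 / 2 : ℝ) < (g : X → ℝ) x} with hV
    have hVopen : IsOpen V := by
      have : V = (fun g : S => (g : X → ℝ) x) ⁻¹' Set.Ioi (1 / 2 : ℝ) := rfl
      rw [this]
      exact isOpen_Ioi.preimage ((continuous_apply x).comp continuous_subtype_val)
    have hset : ({⟨e x, ⟨x, rfl⟩⟩} : Set D) = Subtype.val ⁻¹' V := by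
      ext ⟨b, y, rfl⟩
      simp only [Set.mem_singleton_iff, Set.mem_preimage, hV, Set.mem_setOf_eq]
      constructor
      · intro hb
        have h1 : e y = e x := congrArg Subtype.val hb
        have h2 : y = x := heinj h1
        subst h2
        show (1 / 2 : ℝ) < ind y y
        simp only [ind, if_pos rfl]
        norm_num
      · intro hb
        have hyx : y = x := by
          by_contra hyx
          have h0 : ind y x = 0 := by
            simp only [ind, if_neg (fun h : x = y => hyx h.symm)]
          change (1 / 2 : ℝ) < ind y x at hb
          rw [h0] at hb
          norm_num at hb
        subst hyx
        exact Subtype.ext rfl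
    rw [hset]
    exact hVopen.preimage continuous_subtype_val
  have hbdd : BddAbove { c : Cardinal | ∃ D : Set S, DiscreteTopology D ∧ c = #D } := by
    refine ⟨#S, ?_⟩
    rintro c ⟨D', _, rfl⟩
    exact Cardinal.mk_set_le D'
  have : #X ∈ { c : Cardinal | ∃ D : Set S, DiscreteTopology D ∧ c = #D } :=
    ⟨D, hdisc, hcard.symm⟩
  exact le_csSup hbdd this

end Aux

/-- For any infinite `T₁`-space `X`: `s(SC_p(X)) = nw(SC_p(X)) = w(SC_p(X)) = |X|`. -/
theorem stmt12 {X : Type*} [TopologicalSpace X] [T1Space X] [Infinite X] :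
    spread {f : X → ℝ | ScatCont f} = #X ∧
    netWt {f : X → ℝ | ScatCont f} = #X ∧
    wt {f : X → ℝ | ScatCont f} = #X := by
  have h1 : #X ≤ spread {f : X → ℝ | ScatCont f} := card_le_spread
  have h2 : spread {f : X → ℝ | ScatCont f} ≤ netWt {f : X → ℝ | ScatCont f} :=
    spread_le_netWt _
  have h3 : netWt {f : X → ℝ | ScatCont f} ≤ wt {f : X → ℝ | ScatCont f} := netWt_le_wt _
  have h4 : wt {f : X → ℝ | ScatCont f} ≤ #X := wt_subset_le _
  refine ⟨le_antisymm (h2.trans (h3.trans h4)) h1,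
    le_antisymm (h3.trans h4) (h1.trans h2),
    le_antisymm h4 (h1.trans (h2.trans h3))⟩
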